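/- If d ≥ q - 1, the probability generating function of the number of distinct roots in F_q of a uniformly random polynomial in F_q[x] of degree at most d equals (1 + (t-1)/q)^q, as a polynomial in t. -/

import Mathlib

open Finset Polynomial

/-- The number of distinct zeros in `F` of the polynomial with coefficient vector
`c : Fin (d+1) → F`. -/
def zeroCount {F : Type} [Field F] [Fintype F] [DecidableEq F] {d : ℕ}
    (c : Fin (d + 1) → F) : ℕ :=
  (univ.filter (fun a : F => ∑ i : Fin (d + 1), c i * a ^ (i : ℕ) = 0)).card

/-- Evaluation map sending a coefficient vector to the function it defines. -/
def evalMap {F : Type} [Field F] [Fintype F] [DecidableEq F] {d : ℕ}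
    (c : Fin (d + 1) → F) : F → F := fun a => ∑ i : Fin (d + 1), c i * a ^ (i : ℕ)

lemma evalMap_sub {F : Type} [Field F] [Fintype F] [DecidableEq F] {d : ℕ}
    (c c' : Fin (d + 1) → F) : evalMap (c - c') = evalMap c - evalMap c' := by
  funext a
  simp [evalMap, sub_mul, Finset.sum_sub_distrib]

lemma evalMap_surj {F : Type} [Field F] [Fintype F] [DecidableEq F] {d : ℕ}
    (h : Fintype.card F ≤ d + 1) : Function.Surjective (evalMap (F := F) (d := d)) := by
  intro g
  set p := Lagrange.interpolate univ (id : F → F) g with hp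
  refine ⟨fun i => p.coeff i, ?_⟩
  have hdeg : p.natDegree < d + 1 := by
    by_cases h0 : p = 0
    · simp [h0]
    · have hlt : p.degree < (Fintype.card F : WithBot ℕ) := by
        simpa [hp] using Lagrange.degree_interpolate_lt (v := (id : F → F)) (s := univ) g
          (Set.injOn_id _)
      have : p.natDegree < Fintype.card F := by
        rwa [← Polynomial.natDegree_lt_iff_degree_lt h0] at hlt
      omega
  funext a
  have := Polynomial.eval_eq_sum_range' hdeg a
  rw [evalMap, Fin.sum_univ_eq_sum_range (fun i => p.coeff i * a ^ i), ← this]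
  simpa [hp] using Lagrange.eval_interpolate_at_node g (Set.injOn_id _) (Finset.mem_univ a)

lemma fiber_card_eq {F : Type} [Field F] [Fintype F] [DecidableEq F] {d : ℕ}
    (h : Fintype.card F ≤ d + 1) (g : F → F) :
    (univ.filter (fun c : Fin (d + 1) → F => evalMap c = g)).card
      = (univ.filter (fun c : Fin (d + 1) → F => evalMap c = 0)).card := by
  obtain ⟨c₀, hc₀⟩ := evalMap_surj h g
  apply Finset.card_bij (fun c _ => c - c₀)
  · intro c hc
    simp only [mem_filter, mem_univ, true_and] at hc ⊢
    rw [evalMap_sub, hc, hc₀, sub_self]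
  · intro c hc c' hc' hcc
    simpa using sub_left_injective hcc
  · intro c' hc'
    simp only [mem_filter, mem_univ, true_and] at hc'
    refine ⟨c' + c₀, ?_, by abel⟩
    simp only [mem_filter, mem_univ, true_and]
    have h2 : evalMap (c' + c₀ - c₀) = evalMap (c' + c₀) - evalMap c₀ := evalMap_sub _ _
    simp only [add_sub_cancel_right, hc'] at h2
    rw [eq_comm, sub_eq_zero] at h2
    rw [h2, hc₀]

/-- If `d ≥ q - 1`, the probability generating function of the number of distinct roots
of a uniformly random polynomial of degree at most `d` over `F_q` is `(1 + (t-1)/q)^q`. -/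
theorem pgf_stable (F : Type) [Field F] [Fintype F] [DecidableEq F] (d : ℕ)
    (hd : Fintype.card F - 1 ≤ d) :
    ∑ k ∈ range (Fintype.card F + 1),
        Polynomial.C
          (((univ.filter (fun c : Fin (d + 1) → F => zeroCount c = k)).card : ℚ) /
            (Fintype.card F : ℚ) ^ (d + 1)) * (Polynomial.X : ℚ[X]) ^ k
      = (1 + Polynomial.C ((Fintype.card F : ℚ))⁻¹ * ((Polynomial.X : ℚ[X]) - 1)) ^
          (Fintype.card F) := by
  classical
  set q := Fintype.card F with hq
  have hq1 : 1 ≤ q := Fintype.card_pos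
  have hqd : q ≤ d + 1 := by omega
  have hq0 : (q : ℚ) ≠ 0 := Nat.cast_ne_zero.mpr (by omega)
  set N := (univ.filter (fun c : Fin (d + 1) → F => evalMap c = 0)).card with hN
  -- the count identity: q ^ (d+1) = q ^ q * N
  have hcount : q ^ (d + 1) = q ^ q * N := by
    have := Finset.card_eq_sum_card_fiberwise
      (f := fun c : Fin (d + 1) → F => evalMap c) (s := univ) (t := univ)
      (fun x _ => mem_univ _)
    rw [Finset.card_univ, Fintype.card_fun, Fintype.card_fin] at this
    rw [hq, this]
    rw [Finset.sum_congr rfl (fun g _ => fiber_card_eq hqd g)]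
    simp [Finset.card_univ, Fintype.card_fun, mul_comm, hN]
  -- zeroCount in terms of evalMap
  have hzc : ∀ c : Fin (d + 1) → F,
      zeroCount c = (univ.filter (fun a : F => evalMap c a = 0)).card := fun c => rfl
  -- Step 1: the unnormalized generating polynomial as a sum over coefficient vectors
  have step1 : ∑ k ∈ range (q + 1),
      (C (((univ.filter (fun c : Fin (d + 1) → F => zeroCount c = k)).card : ℚ)) * X ^ k)
      = ∑ c : Fin (d + 1) → F, (X : ℚ[X]) ^ zeroCount c := by
    rw [← Finset.sum_fiberwise_of_maps_to (g := fun c : Fin (d + 1) → F => zeroCount c)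
      (t := range (q + 1)) (fun c _ => by
        simp only [mem_range]
        have : zeroCount c ≤ q := by
          rw [hzc, hq]
          exact (Finset.card_filter_le _ _).trans (by simp)
        omega)]
    refine Finset.sum_congr rfl fun k _ => ?_
    have hinner : ∀ c ∈ univ.filter (fun c : Fin (d + 1) → F => zeroCount c = k),
        (X : ℚ[X]) ^ zeroCount c = (X : ℚ[X]) ^ k := fun c hc => by
      rw [(Finset.mem_filter.mp hc).2]
    rw [Finset.sum_congr rfl hinner, Finset.sum_const, nsmul_eq_mul]
    simp [Polynomial.C_eq_natCast]
  -- Step 2: group by the evaluation function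
  have step2 : ∑ c : Fin (d + 1) → F, (X : ℚ[X]) ^ zeroCount c
      = (N : ℚ[X]) * ∑ g : F → F, (X : ℚ[X]) ^ (univ.filter (fun a : F => g a = 0)).card := by
    rw [← Finset.sum_fiberwise_of_maps_to (g := fun c : Fin (d + 1) → F => evalMap c)
      (t := univ) (fun c _ => mem_univ _), Finset.mul_sum]
    refine Finset.sum_congr rfl fun g _ => ?_
    have hinner : ∀ c ∈ univ.filter (fun c : Fin (d + 1) → F => evalMap c = g),
        (X : ℚ[X]) ^ zeroCount c
          = (X : ℚ[X]) ^ (univ.filter (fun a : F => g a = 0)).card := fun c hc => by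
      rw [hzc]
      congr 2
      exact Finset.filter_congr (fun a _ => by rw [(Finset.mem_filter.mp hc).2])
    rw [Finset.sum_congr rfl hinner, Finset.sum_const, fiber_card_eq hqd g, nsmul_eq_mul]
  -- Step 3: the sum over all functions
  have step3 : ∑ g : F → F, (X : ℚ[X]) ^ (univ.filter (fun a : F => g a = 0)).card
      = (X + C ((q : ℚ) - 1)) ^ q := by
    have expand : ∀ g : F → F, (X : ℚ[X]) ^ (univ.filter (fun a : F => g a = 0)).card
        = ∏ a : F, (if g a = 0 then (X : ℚ[X]) else 1) := by
      intro g
      rw [Finset.prod_ite, Finset.prod_const, Finset.prod_const, one_pow, mul_one]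
    rw [Finset.sum_congr rfl (fun g _ => expand g), ← Fintype.prod_sum
      (fun (_ : F) (v : F) => if v = 0 then (X : ℚ[X]) else 1)]
    have hsum : ∑ v : F, (if v = 0 then (X : ℚ[X]) else 1) = X + C ((q : ℚ) - 1) := by
      rw [Finset.sum_ite, Finset.sum_const, Finset.sum_const]
      have h1 : (univ.filter (fun v : F => v = 0)) = {0} := by
        ext v; simp
      have h2 : (univ.filter (fun v : F => ¬ v = 0)).card = q - 1 := by
        rw [Finset.filter_not, Finset.card_sdiff_of_subset (Finset.filter_subset _ _), h1]
        simp [hq]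
      rw [h1, h2]
      have hcast : ((q - 1 : ℕ) : ℚ[X]) = C ((q : ℚ) - 1) := by
        push_cast [Nat.cast_sub hq1]
        simp [Polynomial.C_sub, Polynomial.C_1, sub_eq_add_neg]
      rw [Finset.card_singleton, one_nsmul, nsmul_eq_mul, mul_one, hcast]
    rw [Finset.prod_congr rfl (fun a _ => hsum), Finset.prod_const, Finset.card_univ, hq]
  -- rewrite the RHS base
  have hbase : (1 : ℚ[X]) + C ((q : ℚ))⁻¹ * (X - 1) = C ((q : ℚ))⁻¹ * (X + C ((q : ℚ) - 1)) := by
    have h : (q : ℚ)⁻¹ * ((q : ℚ) - 1) = 1 - (q : ℚ)⁻¹ := by field_simp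
    rw [mul_add, ← Polynomial.C_mul, h]
    rw [Polynomial.C_sub, Polynomial.C_1]
    ring
  rw [hbase, mul_pow, ← Polynomial.C_pow]
  -- put the LHS together
  have hconst : ∀ k, C (((univ.filter (fun c : Fin (d + 1) → F => zeroCount c = k)).card : ℚ) /
      (q : ℚ) ^ (d + 1)) * (X : ℚ[X]) ^ k
      = C ((q : ℚ) ^ (d + 1))⁻¹ *
        (C (((univ.filter (fun c : Fin (d + 1) → F => zeroCount c = k)).card : ℚ)) * X ^ k) := by
    intro k
    rw [div_eq_mul_inv, Polynomial.C_mul]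
    ring
  calc ∑ k ∈ range (q + 1),
      C (((univ.filter (fun c : Fin (d + 1) → F => zeroCount c = k)).card : ℚ) /
        (q : ℚ) ^ (d + 1)) * (X : ℚ[X]) ^ k
      = C ((q : ℚ) ^ (d + 1))⁻¹ * ∑ k ∈ range (q + 1),
        (C (((univ.filter (fun c : Fin (d + 1) → F => zeroCount c = k)).card : ℚ)) * X ^ k) := by
        rw [Finset.mul_sum]
        exact Finset.sum_congr rfl fun k _ => hconst k
    _ = C ((q : ℚ) ^ (d + 1))⁻¹ * ((N : ℚ[X]) * (X + C ((q : ℚ) - 1)) ^ q) := by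
        rw [step1, step2, step3]
    _ = C (((q : ℚ))⁻¹ ^ q) * (X + C ((q : ℚ) - 1)) ^ q := by
        have hNQ : (N : ℚ[X]) = C ((N : ℚ)) := by simp
        rw [hNQ, ← mul_assoc, ← Polynomial.C_mul]
        congr 2
        have : ((q : ℚ)) ^ (d + 1) = (q : ℚ) ^ q * (N : ℚ) := by
          have := congrArg (fun n : ℕ => (n : ℚ)) hcount
          push_cast at this
          exact this
        have hN0 : (N : ℚ) ≠ 0 := by
          have hN0' : N ≠ 0 := by
            intro h
            rw [h, mul_zero] at hcount
            exact (pow_pos (by omega : 0 < q) (d + 1)).ne' hcount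
          exact Nat.cast_ne_zero.mpr hN0'
        rw [this, mul_inv, mul_assoc, inv_mul_cancel₀ hN0, mul_one, inv_pow]
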